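/- arXiv:2306.15582 — 8 statements merged into one kernel-verified Lean document; each statement's English description precedes it below -/
import Mathlib

section
/- Let (A, ▷) be an algebra over a field with associator ass(x,y,z) = x▷(y▷z) - (x▷y)▷z and triple bracket [x,y,z] = ass(x,y,z) - ass(y,x,z). If A satisfies (1) [x,y,z]+[y,z,x]+[z,x,y] = 0 for all x,y,z, and (2) w▷[x,y,z] = [w▷x,y,z]+[x,w▷y,z]+[x,y,w▷z] for all w,x,y,z, then (A, [_,_,_]) is a Lie triple system, i.e., the triple bracket satisfies [x,y,z] = -[y,x,z], [x,y,z]+[y,z,x]+[z,x,y] = 0, and [u,v,[x,y,z]] = [[u,v,x],y,z]+[x,[u,v,y],z]+[x,y,[u,v,z]]. -/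
/-- If an algebra `(A, ▷)` satisfies the two Lie admissible triple (LAT) identities,
then its triple bracket makes `A` a Lie triple system. -/
theorem lat_is_lie_triple_system {K A : Type*} [Field K] [AddCommGroup A] [Module K A]
    (op : A →ₗ[K] A →ₗ[K] A) (trib : A → A → A → A)
    (htrib : ∀ x y z : A, trib x y z =
      (op x (op y z) - op (op x y) z) - (op y (op x z) - op (op y x) z))
    (h1 : ∀ x y z : A, trib x y z + trib y z x + trib z x y = 0)
    (h2 : ∀ w x y z : A, op w (trib x y z) =
      trib (op w x) y z + trib x (op w y) z + trib x y (op w z)) :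
    (∀ x y z : A, trib x y z = - trib y x z) ∧
    (∀ x y z : A, trib x y z + trib y z x + trib z x y = 0) ∧
    (∀ u v x y z : A, trib u v (trib x y z) =
      trib (trib u v x) y z + trib x (trib u v y) z + trib x y (trib u v z)) := by
  have hs1 : ∀ a b y z : A, trib (a - b) y z = trib a y z - trib b y z := by
    intro a b y z
    simp only [htrib, map_sub, LinearMap.sub_apply]
    abel
  have hs2 : ∀ x a b z : A, trib x (a - b) z = trib x a z - trib x b z := by
    intro x a b z
    simp only [htrib, map_sub, LinearMap.sub_apply]
    abel
  have hs3 : ∀ x y a b : A, trib x y (a - b) = trib x y a - trib x y b := by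
    intro x y a b
    simp only [htrib, map_sub, LinearMap.sub_apply]
    abel
  refine ⟨?_, h1, ?_⟩
  · intro x y z
    simp only [htrib]
    abel
  · intro u v x y z
    rw [htrib u v (trib x y z), htrib u v x, htrib u v y, htrib u v z]
    simp only [h2, map_add, hs1, hs2, hs3]
    abel
end

section
/- Let (A, [_,_], ▶) be a post-Lie algebra over a field of characteristic zero. Define x ▷ y = x ▶ y + (1/2)[x,y]. Then the skew associator of ▷ satisfies ass_▷(x,y,z) - ass_▷(y,x,z) = -(1/4)[[x,y],z] for all x,y,z, where ass_▷(x,y,z) = x▷(y▷z) - (x▷y)▷z. -/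
/-- In a post-Lie algebra over a field of characteristic zero, the product
`x ▷ y = x ▶ y + (1/2)[x,y]` has skew associator `-(1/4)[[x,y],z]`. -/
theorem postLie_skew_associator {K A : Type*} [Field K] [CharZero K]
    [LieRing A] [LieAlgebra K A]
    (bt : A →ₗ[K] A →ₗ[K] A)
    (hpl1 : ∀ x y z : A, bt ⁅x, y⁆ z =
      bt x (bt y z) - bt (bt x y) z - (bt y (bt x z) - bt (bt y x) z))
    (hpl2 : ∀ x y z : A, bt x ⁅y, z⁆ = ⁅bt x y, z⁆ + ⁅y, bt x z⁆)
    (rd : A → A → A)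
    (hrd : ∀ x y : A, rd x y = bt x y + (2 : K)⁻¹ • ⁅x, y⁆) :
    ∀ x y z : A,
      (rd x (rd y z) - rd (rd x y) z) - (rd y (rd x z) - rd (rd y x) z) =
        -((4 : K)⁻¹ • ⁅⁅x, y⁆, z⁆) := by
  intro x y z
  have jac : ⁅x, ⁅y, z⁆⁆ = ⁅⁅x, y⁆, z⁆ + ⁅y, ⁅x, z⁆⁆ := leibniz_lie x y z
  simp only [hrd, map_add, map_smul, LinearMap.add_apply, LinearMap.smul_apply,
    lie_add, add_lie, lie_smul, smul_lie, hpl2, hpl1, smul_add, smul_sub, lie_skew]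
  rw [jac, show ⁅y, ⁅x, z⁆⁆ = ⁅⁅y,x⁆,z⁆ + ⁅x,⁅y,z⁆⁆ from leibniz_lie y x z,
    show (⁅y,x⁆:A) = -⁅x,y⁆ from (lie_skew y x).symm]
  simp only [neg_lie, lie_neg, smul_neg]
  match_scalars <;> (field_simp; try ring)
end

section
/- Let (A, [_,_], ▶) be a post-Lie algebra over a field of characteristic zero and define x ▷ y = x ▶ y + (1/2)[x,y]. Then (A, ▷) is Lie admissible, i.e., setting [x,y,z] = (x▷(y▷z)-(x▷y)▷z) - (y▷(x▷z)-(y▷x)▷z), one has [x,y,z]+[y,z,x]+[z,x,y] = 0 for all x,y,z ∈ A. -/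
/-- In a post-Lie algebra over a field of characteristic zero, the product
`x ▷ y = x ▶ y + (1/2)[x,y]` is Lie admissible: the skew-symmetrized associator
satisfies the cyclic sum identity. -/
theorem postLie_gives_lie_admissible {K A : Type*} [Field K] [CharZero K]
    [LieRing A] [LieAlgebra K A]
    (bt : A →ₗ[K] A →ₗ[K] A)
    (hpl1 : ∀ x y z : A, bt ⁅x, y⁆ z =
      bt x (bt y z) - bt (bt x y) z - (bt y (bt x z) - bt (bt y x) z))
    (hpl2 : ∀ x y z : A, bt x ⁅y, z⁆ = ⁅bt x y, z⁆ + ⁅y, bt x z⁆)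
    (rd : A → A → A)
    (hrd : ∀ x y : A, rd x y = bt x y + (2 : K)⁻¹ • ⁅x, y⁆)
    (trib : A → A → A → A)
    (htrib : ∀ x y z : A, trib x y z =
      (rd x (rd y z) - rd (rd x y) z) - (rd y (rd x z) - rd (rd y x) z)) :
    ∀ x y z : A, trib x y z + trib y z x + trib z x y = 0 := by
  intro x y z
  simp only [htrib, hrd, map_add, map_smul, LinearMap.add_apply, LinearMap.smul_apply,
    hpl1, hpl2, lie_add, add_lie, lie_smul, smul_lie, smul_add, smul_sub, lie_sub, sub_lie,
    lie_lie]
  rw [show ⁅y,x⁆ = -⁅x,y⁆ from (lie_skew y x).symm,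
      show ⁅z,x⁆ = -⁅x,z⁆ from (lie_skew z x).symm,
      show ⁅z,y⁆ = -⁅y,z⁆ from (lie_skew z y).symm]
  simp only [map_neg, LinearMap.neg_apply, neg_lie, lie_neg, smul_neg, neg_neg, lie_lie]
  rw [show ⁅z,⁅x,y⁆⁆ = -⁅x,⁅y,z⁆⁆ + ⁅y,⁅x,z⁆⁆ from by rw [← lie_skew z ⁅x,y⁆, lie_lie]; abel]
  simp only [smul_neg, smul_add, smul_sub]
  module
end

section
/- Let (A, [_,_], ▶) be a post-Lie algebra over a field of characteristic zero. Define x ▷ y = x ▶ y + (1/2)[x,y]. Then (A, ▷) is a Lie admissible triple algebra: with triple bracket [x,y,z] := ass_▷(x,y,z) - ass_▷(y,x,z), the identities [x,y,z]+[y,z,x]+[z,x,y]=0 and w▷[x,y,z] = [w▷x,y,z]+[x,w▷y,z]+[x,y,w▷z] hold for all w,x,y,z ∈ A. -/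
/-- In a post-Lie algebra over a field of characteristic zero, the product
`x ▷ y = x ▶ y + (1/2)[x,y]` makes `A` a Lie admissible triple algebra:
its triple bracket satisfies the cyclic identity and `▷` acts on it by derivations. -/
theorem postLie_gives_LAT {K A : Type*} [Field K] [CharZero K]
    [LieRing A] [LieAlgebra K A]
    (bt : A →ₗ[K] A →ₗ[K] A)
    (hpl1 : ∀ x y z : A, bt ⁅x, y⁆ z =
      bt x (bt y z) - bt (bt x y) z - (bt y (bt x z) - bt (bt y x) z))
    (hpl2 : ∀ x y z : A, bt x ⁅y, z⁆ = ⁅bt x y, z⁆ + ⁅y, bt x z⁆)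
    (rd : A → A → A)
    (hrd : ∀ x y : A, rd x y = bt x y + (2 : K)⁻¹ • ⁅x, y⁆)
    (trib : A → A → A → A)
    (htrib : ∀ x y z : A, trib x y z =
      (rd x (rd y z) - rd (rd x y) z) - (rd y (rd x z) - rd (rd y x) z)) :
    (∀ x y z : A, trib x y z + trib y z x + trib z x y = 0) ∧
    (∀ w x y z : A, rd w (trib x y z) =
      trib (rd w x) y z + trib x (rd w y) z + trib x y (rd w z)) := by
  have key : ∀ x y z : A, trib x y z = -((2:K)⁻¹ • (2:K)⁻¹ • ⁅⁅x,y⁆,z⁆) := by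
    intro x y z
    rw [htrib]
    simp only [hrd, map_add, map_smul, LinearMap.add_apply, LinearMap.smul_apply,
      lie_add, add_lie, lie_smul, smul_lie, smul_add, smul_sub, lie_sub, sub_lie, hpl1, hpl2, lie_lie]
    module
  constructor
  · intro x y z
    have jac : ⁅⁅x,y⁆,z⁆ + ⁅⁅y,z⁆,x⁆ + ⁅⁅z,x⁆,y⁆ = (0:A) := by
      have h := lie_jacobi x y z
      rw [← lie_skew ⁅y,z⁆ x, ← lie_skew ⁅z,x⁆ y, ← lie_skew ⁅x,y⁆ z]
      linear_combination (norm := abel) -h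
    simp only [key]
    rw [← neg_add, ← neg_add, ← smul_add, ← smul_add, ← smul_add, ← smul_add, jac]
    simp
  · intro w x y z
    simp only [key, hrd, map_add, map_smul, map_neg, LinearMap.add_apply,
      LinearMap.smul_apply, LinearMap.neg_apply, lie_add, add_lie, lie_smul, smul_lie,
      lie_neg, neg_lie, smul_add, smul_neg, smul_sub, lie_sub, sub_lie, map_sub, hpl2, lie_lie]
    module
end

section
/- For all positive integers n and k, the identity ∑_{j=1}^{n-1} (n−j)·C(k−2+(n−j), n−j) + C(k+(n−1), n−1) = n·C((k−1)+(n−1), n−1) holds, where C(m,r) denotes the binomial coefficient m choose r. -/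
/-- Subtraction-free version, by induction on `m`. -/
lemma binom_aux (k' m : ℕ) :
    (∑ i ∈ Finset.range m, (i + 1) * Nat.choose (k' + i) (i + 1))
      + Nat.choose (k' + 1 + m) m = (m + 1) * Nat.choose (k' + m) m := by
  induction m with
  | zero => simp
  | succ m ih =>
      rw [Finset.sum_range_succ]
      have pas1 : Nat.choose (k' + m + 1) (m + 1)
          = Nat.choose (k' + m) m + Nat.choose (k' + m) (m + 1) :=
        Nat.choose_succ_succ' (k' + m) m ▸ rfl
      have pas2 : Nat.choose (k' + m + 2) (m + 1)
          = Nat.choose (k' + m + 1) m + Nat.choose (k' + m + 1) (m + 1) :=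
        Nat.choose_succ_succ' (k' + m + 1) m ▸ rfl
      have h1 : k' + 1 + (m + 1) = k' + m + 2 := by ring
      have h2 : k' + 1 + m = k' + m + 1 := by ring
      have h3 : k' + (m + 1) = k' + m + 1 := by ring
      rw [h1, h3, pas2]
      rw [h2] at ih
      rw [pas1]
      linarith [ih]

/-- For positive integers `n`, `k`:
`∑_{j=1}^{n-1} (n−j)·C(k−2+(n−j), n−j) + C(k+(n−1), n−1) = n·C((k−1)+(n−1), n−1)`. -/
theorem binomial_identity (n k : ℕ) (hn : 1 ≤ n) (hk : 1 ≤ k) :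
    (∑ j ∈ Finset.Icc 1 (n - 1), (n - j) * Nat.choose (k + (n - j) - 2) (n - j))
      + Nat.choose (k + (n - 1)) (n - 1)
      = n * Nat.choose (k + n - 2) (n - 1) := by
  obtain ⟨m, rfl⟩ : ∃ m, n = m + 1 := ⟨n - 1, by omega⟩
  obtain ⟨k', rfl⟩ : ∃ k', k = k' + 1 := ⟨k - 1, by omega⟩
  have hsum : (∑ j ∈ Finset.Icc 1 (m + 1 - 1), (m + 1 - j) *
        Nat.choose (k' + 1 + (m + 1 - j) - 2) (m + 1 - j))
      = ∑ i ∈ Finset.range m, (i + 1) * Nat.choose (k' + i) (i + 1) := by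
    apply Finset.sum_bij' (fun j _ => m - j) (fun i _ => m - i)
    · intro j hj; simp only [Finset.mem_Icc] at hj; simp only [Finset.mem_range]; omega
    · intro i hi; simp only [Finset.mem_range] at hi; simp only [Finset.mem_Icc]; omega
    · intro j hj; simp only [Finset.mem_Icc] at hj; omega
    · intro i hi; simp only [Finset.mem_range] at hi; omega
    · intro j hj
      simp only [Finset.mem_Icc] at hj
      have e1 : m + 1 - j = (m - j) + 1 := by omega
      have e2 : k' + 1 + (m - j + 1) - 2 = k' + (m - j) := by omega
      rw [e1, e2]
  rw [hsum]
  have e3 : k' + 1 + (m + 1 - 1) = k' + 1 + m := by omega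
  have e4 : m + 1 - 1 = m := rfl
  have e5 : k' + 1 + (m + 1) - 2 = k' + m := by omega
  rw [e4, e5]
  exact binom_aux k' m
end

section
/- Fix a positive integer n and define α_k(n) recursively by α_0(n) = 1 and, for k ≥ 1, α_k(n) = C(k+n−1, n−1) + ∑_{i=2}^{k} ( ∑_{j=1}^{n-1} (n−j)·C(i−2+(n−j), n−j) ) · α_{k−i}(n). Then α_k(n) = n^k for all k ≥ 0. -/
open Finset

private lemma reflect_sum (m : ℕ) (f : ℕ → ℕ) :
    ∑ j ∈ Icc 1 m, f (m + 1 - j) = ∑ t ∈ Icc 1 m, f t := by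
  refine Finset.sum_nbij' (fun j => m + 1 - j) (fun j => m + 1 - j) ?_ ?_ ?_ ?_ ?_ <;>
    simp only [Finset.mem_Icc] <;> intros <;> first | omega | trivial

private lemma key_id (q m : ℕ) :
    (∑ t ∈ Icc 1 m, t * Nat.choose (q + t) t) + Nat.choose (q + m + 2) m
      = (m + 1) * Nat.choose (q + m + 1) m := by
  induction m with
  | zero => simp
  | succ m ih =>
    rw [Finset.sum_Icc_succ_top (by omega : 1 ≤ m + 1)]
    have p1 : Nat.choose (q + (m + 1) + 1) (m + 1)
        = Nat.choose (q + m + 1) m + Nat.choose (q + m + 1) (m + 1) := by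
      have := Nat.choose_succ_succ (q + m + 1) m
      have e : q + (m + 1) + 1 = (q + m + 1) + 1 := by omega
      rw [e, this]
    have p2 : Nat.choose (q + (m + 1) + 2) (m + 1)
        = Nat.choose (q + m + 2) m + Nat.choose (q + (m+1) + 1) (m + 1) := by
      have := Nat.choose_succ_succ (q + m + 2) m
      have e : q + (m + 1) + 2 = (q + m + 2) + 1 := by omega
      have e2 : q + (m + 1) + 1 = q + m + 2 := by omega
      rw [e, this, e2]
    rw [p2, p1]
    set S := ∑ t ∈ Icc 1 m, t * Nat.choose (q + t) t with hS
    set a := Nat.choose (q + m + 1) m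
    set b := Nat.choose (q + m + 1) (m + 1)
    set c := Nat.choose (q + m + 2) m
    have e3 : q + (m + 1) = q + m + 1 := by omega
    rw [e3]
    zify at ih ⊢
    linear_combination ih

private lemma main_id (m : ℕ) : ∀ k : ℕ, 1 ≤ k →
    Nat.choose (k + m) m
      + ∑ i ∈ Icc 2 k,
          (∑ j ∈ Icc 1 m, (m + 1 - j) * Nat.choose (i + (m + 1 - j) - 2) (m + 1 - j))
            * (m + 1) ^ (k - i)
      = (m + 1) ^ k := by
  intro k
  induction k with
  | zero => omega
  | succ q ih =>
    intro _
    rcases Nat.eq_zero_or_pos q with hq | hq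
    · subst hq
      rw [show 1 + m = m + 1 by omega]
      simp [Nat.choose_symm (Nat.le_succ m)]
    · -- q ≥ 1, k = q + 1
      have ih' := ih hq
      rw [Finset.sum_Icc_succ_top (by omega : 2 ≤ q + 1)]
      -- rewrite the top term
      have htop : (∑ j ∈ Icc 1 m, (m + 1 - j) * Nat.choose ((q+1) + (m + 1 - j) - 2) (m + 1 - j))
          = ∑ t ∈ Icc 1 m, t * Nat.choose ((q-1) + t) t := by
        rw [← reflect_sum m (fun t => t * Nat.choose ((q-1) + t) t)]
        apply Finset.sum_congr rfl
        intro j hj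
        rw [Finset.mem_Icc] at hj
        have e : (q+1) + (m + 1 - j) - 2 = (q-1) + (m + 1 - j) := by omega
        rw [e]
      rw [htop]
      -- rewrite the remaining sum
      have hrest : ∀ i ∈ Icc 2 q,
          (∑ j ∈ Icc 1 m, (m + 1 - j) * Nat.choose (i + (m + 1 - j) - 2) (m + 1 - j))
            * (m + 1) ^ (q + 1 - i)
          = (m+1) * ((∑ j ∈ Icc 1 m, (m + 1 - j) * Nat.choose (i + (m + 1 - j) - 2) (m + 1 - j))
            * (m + 1) ^ (q - i)) := by
        intro i hi
        rw [Finset.mem_Icc] at hi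
        have e : q + 1 - i = (q - i) + 1 := by omega
        rw [e, pow_succ]
        ring
      rw [Finset.sum_congr rfl hrest, ← Finset.mul_sum]
      have hkey := key_id (q - 1) m
      have e1 : q - 1 + m + 2 = q + 1 + m := by omega
      have e2 : q - 1 + m + 1 = q + m := by omega
      rw [e1, e2] at hkey
      have e3 : q + 1 - (q + 1) = 0 := by omega
      rw [e3, pow_zero, mul_one]
      set S := ∑ t ∈ Icc 1 m, t * Nat.choose (q - 1 + t) t
      set T := ∑ i ∈ Icc 2 q,
          (∑ j ∈ Icc 1 m, (m + 1 - j) * Nat.choose (i + (m + 1 - j) - 2) (m + 1 - j))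
            * (m + 1) ^ (q - i)
      set A := Nat.choose (q + m) m
      set B := Nat.choose (q + 1 + m) m
      have epow : (m + 1) ^ (q + 1) = (m + 1) * (m + 1) ^ q := by rw [pow_succ]; ring
      zify at ih' hkey epow ⊢
      linear_combination hkey + (m + 1 : ℤ) * ih' + epow

/-- The number `α_k(n)` of OSBB-words of length `k` over `n` ordered letters, defined by
`α_0 = 1` and the recursion over the length of the first block, equals `n^k`. -/
theorem osbb_count (n : ℕ) (hn : 1 ≤ n) (α : ℕ → ℕ)
    (h0 : α 0 = 1)
    (hrec : ∀ k : ℕ, 1 ≤ k →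
      α k = Nat.choose (k + n - 1) (n - 1)
        + ∑ i ∈ Finset.Icc 2 k,
            (∑ j ∈ Finset.Icc 1 (n - 1),
              (n - j) * Nat.choose (i + (n - j) - 2) (n - j)) * α (k - i)) :
    ∀ k : ℕ, α k = n ^ k := by
  obtain ⟨m, rfl⟩ : ∃ m, n = m + 1 := ⟨n - 1, by omega⟩
  intro k
  induction k using Nat.strong_induction_on with
  | _ k ih =>
    cases k with
    | zero => simpa using h0
    | succ q =>
      rw [hrec (q + 1) (by omega)]
      have hs : ∀ i ∈ Icc 2 (q + 1),
          (∑ j ∈ Icc 1 (m + 1 - 1), (m + 1 - j) * Nat.choose (i + (m + 1 - j) - 2) (m + 1 - j))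
            * α (q + 1 - i)
          = (∑ j ∈ Icc 1 m, (m + 1 - j) * Nat.choose (i + (m + 1 - j) - 2) (m + 1 - j))
            * (m + 1) ^ (q + 1 - i) := by
        intro i hi
        rw [Finset.mem_Icc] at hi
        rw [ih (q + 1 - i) (by omega)]
        norm_num
      rw [Finset.sum_congr rfl hs]
      have e : q + 1 + (m + 1) - 1 = q + 1 + m := by omega
      have e2 : m + 1 - 1 = m := by omega
      rw [e, e2]
      exact main_id m (q + 1) (by omega)
end

section
/- Let (A, ▷) be a Lie admissible triple algebra with triple bracket [x,y,z] and derivations D_{x,y}(z) = [x,y,z]. Define x▶D_{y,z} := D_{x▷y,z} + D_{y,x▷z} for x,y,z ∈ A. Then for all w,x,y,z,t ∈ A: D_{x,y}∘D_{z,w} − D_{z,w}∘D_{x,y} = D_{[x,y,z],w} + D_{z,[x,y,w]}. -/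
/-- In a Lie admissible triple algebra, the maps `D_{x,y} : t ↦ [x,y,t]` satisfy
`D_{x,y}∘D_{z,w} − D_{z,w}∘D_{x,y} = D_{[x,y,z],w} + D_{z,[x,y,w]}`. -/
theorem lat_derivation_commutator {K A : Type*} [Field K] [AddCommGroup A] [Module K A]
    (op : A →ₗ[K] A →ₗ[K] A) (trib : A → A → A → A)
    (htrib : ∀ x y z : A, trib x y z =
      (op x (op y z) - op (op x y) z) - (op y (op x z) - op (op y x) z))
    (hLAT1 : ∀ x y z : A, trib x y z + trib y z x + trib z x y = 0)
    (hLAT2 : ∀ w x y z : A, op w (trib x y z) =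
      trib (op w x) y z + trib x (op w y) z + trib x y (op w z)) :
    ∀ x y z w t : A,
      trib x y (trib z w t) - trib z w (trib x y t) =
        trib (trib x y z) w t + trib z (trib x y w) t := by
  have sub1 : ∀ a b y z : A, trib (a - b) y z = trib a y z - trib b y z := by
    intro a b y z
    simp only [htrib, map_sub, LinearMap.sub_apply]
    abel
  have sub2 : ∀ x a b z : A, trib x (a - b) z = trib x a z - trib x b z := by
    intro x a b z
    simp only [htrib, map_sub, LinearMap.sub_apply]
    abel
  have sub3 : ∀ x y a b : A, trib x y (a - b) = trib x y a - trib x y b := by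
    intro x y a b
    simp only [htrib, map_sub, LinearMap.sub_apply]
    abel
  have key : ∀ x y z w t : A, trib x y (trib z w t) =
      trib (trib x y z) w t + trib z (trib x y w) t + trib z w (trib x y t) := by
    intro x y z w t
    have e1 := hLAT2 y z w t
    have e2 := hLAT2 x z w t
    have e3 := hLAT2 (op x y) z w t
    have e4 := hLAT2 (op y x) z w t
    rw [htrib x y (trib z w t), e1, e2, e3, e4]
    simp only [map_add, hLAT2]
    rw [htrib x y z, htrib x y w, htrib x y t,
        sub1, sub1, sub1, sub2, sub2, sub2, sub3, sub3, sub3]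
    abel
  intro x y z w t
  rw [key]
  abel
end

section
/- Let A be an algebra with product ▷ satisfying w▷[x,y,z] = [w▷x,y,z]+[x,w▷y,z]+[x,y,w▷z], where [x,y,z] is the triple bracket (skew associator). Then for any x₀,x₁,x₂ ∈ A and r₁,r₂,r₃ ∈ A, the second-order identity holds: (x₀▷(x₁▷[r₁,r₂,r₃])) − ((x₀▷x₁)▷[r₁,r₂,r₃]) equals the sum over all ways of distributing the word x₀x₁ (via the left D-algebra action, i.e., ass(x₀,x₁,·)) among the three slots: [ass(x₀,x₁,r₁),r₂,r₃] + [r₁,ass(x₀,x₁,r₂),r₃] + [r₁,r₂,ass(x₀,x₁,r₃)] + [x₀▷r₁,x₁▷r₂,r₃] + [x₀▷r₁,r₂,x₁▷r₃] + [r₁,x₀▷r₂,x₁▷r₃] + [x₁▷r₁,x₀▷r₂,r₃] + [x₁▷r₁,r₂,x₀▷r₃] + [r₁,x₁▷r₂,x₀▷r₃], where ass(a,b,c) = a▷(b▷c) − (a▷b)▷c. -/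
/-- The `n = 2` case of the D-algebra action of words on triple brackets: if `▷`
satisfies the LAT derivation identity, then the action of the word `x₀x₁` (i.e. the
associator `ass(x₀,x₁,·)`) on `[r₁,r₂,r₃]` distributes over the three slots. -/
theorem d_algebra_word_action_on_triple_bracket
    {K A : Type*} [Field K] [AddCommGroup A] [Module K A]
    (op : A →ₗ[K] A →ₗ[K] A) (trib : A → A → A → A)
    (htrib : ∀ x y z : A, trib x y z =
      (op x (op y z) - op (op x y) z) - (op y (op x z) - op (op y x) z))
    (hLAT2 : ∀ w x y z : A, op w (trib x y z) =
      trib (op w x) y z + trib x (op w y) z + trib x y (op w z)) :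
    ∀ x₀ x₁ r₁ r₂ r₃ : A,
      op x₀ (op x₁ (trib r₁ r₂ r₃)) - op (op x₀ x₁) (trib r₁ r₂ r₃) =
        trib (op x₀ (op x₁ r₁) - op (op x₀ x₁) r₁) r₂ r₃
        + trib r₁ (op x₀ (op x₁ r₂) - op (op x₀ x₁) r₂) r₃
        + trib r₁ r₂ (op x₀ (op x₁ r₃) - op (op x₀ x₁) r₃)
        + trib (op x₀ r₁) (op x₁ r₂) r₃
        + trib (op x₀ r₁) r₂ (op x₁ r₃)
        + trib r₁ (op x₀ r₂) (op x₁ r₃)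
        + trib (op x₁ r₁) (op x₀ r₂) r₃
        + trib (op x₁ r₁) r₂ (op x₀ r₃)
        + trib r₁ (op x₁ r₂) (op x₀ r₃) := by
  intro x₀ x₁ r₁ r₂ r₃
  have tsub1 : ∀ a b y z : A, trib (a - b) y z = trib a y z - trib b y z := by
    intro a b y z
    simp only [htrib, map_sub, LinearMap.sub_apply]
    abel
  have tsub2 : ∀ x a b z : A, trib x (a - b) z = trib x a z - trib x b z := by
    intro x a b z
    simp only [htrib, map_sub, LinearMap.sub_apply]
    abel
  have tsub3 : ∀ x y a b : A, trib x y (a - b) = trib x y a - trib x y b := by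
    intro x y a b
    simp only [htrib, map_sub, LinearMap.sub_apply]
    abel
  rw [hLAT2 x₁ r₁ r₂ r₃, map_add, map_add, hLAT2 x₀ (op x₁ r₁) r₂ r₃,
    hLAT2 x₀ r₁ (op x₁ r₂) r₃, hLAT2 x₀ r₁ r₂ (op x₁ r₃),
    hLAT2 (op x₀ x₁) r₁ r₂ r₃, tsub1, tsub2, tsub3]
  abel
end
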